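/- Let {(Xᵢ,Yᵢ)}_{i=1}^n be i.i.d. with joint pmf p_{XY} on a product of finite alphabets 𝒳 × 𝒴, let ε, ε' > 0 and b₁ > b₀ > 0, and suppose ℙ[ f(Yⁿ) > ε' or f(Xⁿ,Yⁿ) > ε' ] ≤ 2^{−n b₁ ε}. Define 𝒞ⁿ ≜ { xⁿ ∈ 𝒳ⁿ : f(xⁿ) ≤ ε and ℙ[ (Xⁿ,Yⁿ) ∉ 𝒜_{ε,ε'}^{(n)}(X,Y) | Xⁿ = xⁿ ] > 2^{−n b₀ ε} }. Then ℙ[ (Xⁿ,Yⁿ) ∈ 𝒜_{ε,ε'}^{(n)}(X,Y) and Xⁿ ∈ 𝒞ⁿ ] ≤ 2^{−n (b₁ − b₀) ε}. -/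

import Mathlib

open Finset Real
open scoped Classical BigOperators

/-- Shannon entropy (in bits) of a pmf on a finite alphabet, with the convention `0 log 0 = 0`. -/
noncomputable def shannonEntropy {W : Type*} [Fintype W] (q : W → ℝ) : ℝ :=
  - ∑ w, q w * Real.logb 2 (q w)

/-- Probability of an i.i.d. sequence: `p(wⁿ) = ∏ᵢ p(wᵢ)`. -/
noncomputable def seqProb {W : Type*} (q : W → ℝ) {n : ℕ} (w : Fin n → W) : ℝ :=
  ∏ i, q (w i)

/-- The deviation `f(wⁿ) = |−(1/n) log₂ p(wⁿ) − H(W)|` of the empirical entropy. -/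
noncomputable def fdev {W : Type*} [Fintype W] (q : W → ℝ) {n : ℕ} (w : Fin n → W) : ℝ :=
  |(-(1 / (n : ℝ))) * Real.logb 2 (seqProb q w) - shannonEntropy q|

/-- Chernoff exponent `C_W^{(1)}(ε) = inf_{s>0} ( ln 𝔼[q(W)^{−s/ln 2}] − s(H(W)+ε) )`. -/
noncomputable def chernoff1 {W : Type*} [Fintype W] (q : W → ℝ) (ε : ℝ) : ℝ :=
  sInf ((fun s : ℝ =>
    Real.log (∑ w ∈ Finset.univ.filter (fun w => 0 < q w), q w ^ (1 - s / Real.log 2))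
      - s * (shannonEntropy q + ε)) '' Set.Ioi 0)

/-- Chernoff exponent `C_W^{(2)}(ε) = inf_{s>0} ( ln 𝔼[q(W)^{s/ln 2}] − s(−H(W)+ε) )`. -/
noncomputable def chernoff2 {W : Type*} [Fintype W] (q : W → ℝ) (ε : ℝ) : ℝ :=
  sInf ((fun s : ℝ =>
    Real.log (∑ w ∈ Finset.univ.filter (fun w => 0 < q w), q w ^ (1 + s / Real.log 2))
      - s * (-shannonEntropy q + ε)) '' Set.Ioi 0)

/-- Marginal on the first component of a joint pmf. -/
noncomputable def margFst {X Y : Type*} [Fintype Y] (p : X × Y → ℝ) (x : X) : ℝ :=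
  ∑ y, p (x, y)

/-- Marginal on the second component of a joint pmf. -/
noncomputable def margSnd {X Y : Type*} [Fintype X] (p : X × Y → ℝ) (y : Y) : ℝ :=
  ∑ x, p (x, y)

/-- The sequence of pairs associated to a pair of sequences. -/
def pairSeq {X Y : Type*} {n : ℕ} (w : (Fin n → X) × (Fin n → Y)) : Fin n → X × Y :=
  fun i => (w.1 i, w.2 i)

/-- Joint probability `p(xⁿ,yⁿ) = ∏ᵢ p(xᵢ,yᵢ)` of a pair of i.i.d. sequences. -/
noncomputable def jointSeqProb {X Y : Type*} (p : X × Y → ℝ) {n : ℕ}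
    (w : (Fin n → X) × (Fin n → Y)) : ℝ :=
  ∏ i, p (w.1 i, w.2 i)

/-- The typical set `𝒜_{ε,ε'}^{(n)}(X,Y)`: `f(xⁿ) ≤ ε`, `f(yⁿ) ≤ ε'`, `f(xⁿ,yⁿ) ≤ ε'`. -/
def typical {X Y : Type*} [Fintype X] [Fintype Y] (p : X × Y → ℝ)
    (ε ε' : ℝ) {n : ℕ} (w : (Fin n → X) × (Fin n → Y)) : Prop :=
  fdev (margFst p) w.1 ≤ ε ∧ fdev (margSnd p) w.2 ≤ ε' ∧ fdev p (pairSeq w) ≤ ε'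

/-- Conditional probability `ℙ[ (Xⁿ,Yⁿ) ∉ 𝒜_{ε,ε'}^{(n)}(X,Y) | Xⁿ = xⁿ ]`
(for `xⁿ` with `p(xⁿ) > 0`). -/
noncomputable def condNotTyp {X Y : Type*} [Fintype X] [Fintype Y] (p : X × Y → ℝ)
    (ε ε' : ℝ) {n : ℕ} (xn : Fin n → X) : ℝ :=
  (∑ yn ∈ Finset.univ.filter (fun yn : Fin n → Y => ¬ typical p ε ε' (xn, yn)),
      jointSeqProb p (xn, yn)) / seqProb (margFst p) xn

/-- With `𝒞ⁿ = { xⁿ : f(xⁿ) ≤ ε and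
`ℙ[ (Xⁿ,Yⁿ) ∉ 𝒜_{ε,ε'}^{(n)} | Xⁿ = xⁿ ] > 2^{−n b₀ ε} }`, if
`ℙ[ f(Yⁿ) > ε' or f(Xⁿ,Yⁿ) > ε' ] ≤ 2^{−n b₁ ε}`, then
`ℙ[ (Xⁿ,Yⁿ) ∈ 𝒜_{ε,ε'}^{(n)}(X,Y) and Xⁿ ∈ 𝒞ⁿ ] ≤ 2^{−n(b₁−b₀)ε}`. -/
theorem prob_typical_bad_conditional_bound
    {X Y : Type*} [Fintype X] [Fintype Y] (p : X × Y → ℝ)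
    (hp : ∀ xy, 0 ≤ p xy) (hsum : ∑ xy, p xy = 1)
    (n : ℕ) (ε ε' b₀ b₁ : ℝ) (hε : 0 < ε) (hε' : 0 < ε') (hb₀ : 0 < b₀) (hb₁ : b₀ < b₁)
    (hhyp : ∑ w ∈ Finset.univ.filter (fun w : (Fin n → X) × (Fin n → Y) =>
          fdev (margSnd p) w.2 > ε' ∨ fdev p (pairSeq w) > ε'),
        jointSeqProb p w ≤ (2 : ℝ) ^ (-((n : ℝ) * b₁ * ε))) :
    ∑ w ∈ Finset.univ.filter (fun w : (Fin n → X) × (Fin n → Y) =>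
          typical p ε ε' w ∧
          (fdev (margFst p) w.1 ≤ ε ∧
            condNotTyp p ε ε' w.1 > (2 : ℝ) ^ (-((n : ℝ) * b₀ * ε)))),
        jointSeqProb p w
      ≤ (2 : ℝ) ^ (-((n : ℝ) * (b₁ - b₀) * ε)) := by
  classical
  have two_pos : (0:ℝ) < 2 := by norm_num
  set t₀ := (2 : ℝ) ^ (-((n : ℝ) * b₀ * ε)) with ht₀def
  set t₁ := (2 : ℝ) ^ (-((n : ℝ) * b₁ * ε)) with ht₁def
  have ht₀pos : 0 < t₀ := Real.rpow_pos_of_pos two_pos _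
  have hjnn : ∀ (a : Fin n → X) (b : Fin n → Y), 0 ≤ jointSeqProb p (a, b) := by
    intro a b; exact Finset.prod_nonneg fun i _ => hp _
  have hmnn : ∀ x, 0 ≤ margFst p x := fun x => Finset.sum_nonneg fun y _ => hp _
  have hPnn : ∀ a : Fin n → X, 0 ≤ seqProb (margFst p) a :=
    fun a => Finset.prod_nonneg fun i _ => hmnn _
  set C : Finset (Fin n → X) :=
    Finset.univ.filter (fun xn => fdev (margFst p) xn ≤ ε ∧ condNotTyp p ε ε' xn > t₀)
    with hCdef
  set A : (Fin n → X) → ℝ := fun a =>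
    ∑ b ∈ Finset.univ.filter (fun b : Fin n → Y => ¬ typical p ε ε' (a, b)),
      jointSeqProb p (a, b) with hAdef
  have hmarg : ∀ a : Fin n → X,
      ∑ b : Fin n → Y, jointSeqProb p (a, b) = seqProb (margFst p) a := by
    intro a
    symm
    calc seqProb (margFst p) a = ∏ i, ∑ y, p (a i, y) := rfl
      _ = ∑ b ∈ Fintype.piFinset (fun _ : Fin n => (Finset.univ : Finset Y)),
            ∏ i, p (a i, b i) := Finset.prod_univ_sum _ _
      _ = ∑ b : Fin n → Y, jointSeqProb p (a, b) := by
            rw [Fintype.piFinset_univ]; rfl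
  -- Step 1: the target sum is at most ∑_{a ∈ C} p(a)
  have step1 : (∑ w ∈ Finset.univ.filter (fun w : (Fin n → X) × (Fin n → Y) =>
          typical p ε ε' w ∧
          (fdev (margFst p) w.1 ≤ ε ∧ condNotTyp p ε ε' w.1 > t₀)),
        jointSeqProb p w) ≤ ∑ a ∈ C, seqProb (margFst p) a := by
    have hsub : Finset.univ.filter (fun w : (Fin n → X) × (Fin n → Y) =>
          typical p ε ε' w ∧
          (fdev (margFst p) w.1 ≤ ε ∧ condNotTyp p ε ε' w.1 > t₀)) ⊆
        Finset.univ.filter (fun w : (Fin n → X) × (Fin n → Y) => w.1 ∈ C) := by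
      intro w hw
      simp only [Finset.mem_filter, Finset.mem_univ, true_and] at hw ⊢
      rw [hCdef]; simp only [Finset.mem_filter, Finset.mem_univ, true_and]
      exact hw.2
    calc (∑ w ∈ Finset.univ.filter (fun w : (Fin n → X) × (Fin n → Y) =>
            typical p ε ε' w ∧
            (fdev (margFst p) w.1 ≤ ε ∧ condNotTyp p ε ε' w.1 > t₀)),
          jointSeqProb p w)
        ≤ ∑ w ∈ Finset.univ.filter (fun w : (Fin n → X) × (Fin n → Y) => w.1 ∈ C),
            jointSeqProb p w :=
          Finset.sum_le_sum_of_subset_of_nonneg hsub (fun w _ _ => hjnn w.1 w.2)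
      _ = ∑ a ∈ C, seqProb (margFst p) a := by
          rw [Finset.sum_filter, Fintype.sum_prod_type]
          have h : ∀ a : Fin n → X,
              (∑ b : Fin n → Y, if (a, b).1 ∈ C then jointSeqProb p (a, b) else 0)
                = if a ∈ C then seqProb (margFst p) a else 0 := by
            intro a; by_cases ha : a ∈ C <;> simp [ha, hmarg a]
          rw [Finset.sum_congr rfl (fun a _ => h a), Finset.sum_ite_mem, Finset.univ_inter]
  -- Step 2: conditional bound on C
  have step2 : ∀ a ∈ C, t₀ * seqProb (margFst p) a ≤ A a := by
    intro a ha
    rw [hCdef] at ha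
    simp only [Finset.mem_filter, Finset.mem_univ, true_and] at ha
    have hc : A a / seqProb (margFst p) a > t₀ := ha.2
    by_cases hP : seqProb (margFst p) a = 0
    · rw [hP, div_zero] at hc; linarith
    · have hPpos : 0 < seqProb (margFst p) a := lt_of_le_of_ne (hPnn a) (Ne.symm hP)
      rw [gt_iff_lt, lt_div_iff₀ hPpos] at hc
      nlinarith
  -- Step 3: ∑_{a ∈ C} A a ≤ t₁
  have step3 : ∑ a ∈ C, A a ≤ t₁ := by
    refine le_trans ?_ hhyp
    have hrw : (∑ w ∈ Finset.univ.filter (fun w : (Fin n → X) × (Fin n → Y) =>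
            fdev (margSnd p) w.2 > ε' ∨ fdev p (pairSeq w) > ε'), jointSeqProb p w)
        = ∑ a : Fin n → X, ∑ b ∈ Finset.univ.filter
            (fun b : Fin n → Y => fdev (margSnd p) b > ε' ∨ fdev p (pairSeq (a, b)) > ε'),
              jointSeqProb p (a, b) := by
      rw [Finset.sum_filter, Fintype.sum_prod_type]
      exact Finset.sum_congr rfl fun a _ => (Finset.sum_filter _ _).symm
    rw [hrw]
    have h1 : ∑ a ∈ C, A a = ∑ a ∈ C, ∑ b ∈ Finset.univ.filter
        (fun b : Fin n → Y => fdev (margSnd p) b > ε' ∨ fdev p (pairSeq (a, b)) > ε'),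
          jointSeqProb p (a, b) := by
      refine Finset.sum_congr rfl fun a ha => ?_
      rw [hCdef] at ha
      simp only [Finset.mem_filter, Finset.mem_univ, true_and] at ha
      have hfx : fdev (margFst p) a ≤ ε := ha.1
      rw [hAdef]
      refine Finset.sum_congr (Finset.filter_congr fun b _ => ?_) fun _ _ => rfl
      simp only [typical, not_and_or, not_le, gt_iff_lt]
      constructor
      · rintro (h | h | h)
        · exact absurd hfx (not_le.mpr h)
        · exact Or.inl h
        · exact Or.inr h
      · rintro (h | h)
        · exact Or.inr (Or.inl h)
        · exact Or.inr (Or.inr h)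
    rw [h1]
    exact Finset.sum_le_sum_of_subset_of_nonneg (Finset.subset_univ C)
      (fun a _ _ => Finset.sum_nonneg fun b _ => hjnn a b)
  -- Combine
  set S := ∑ a ∈ C, seqProb (margFst p) a with hSdef
  have h2 : t₀ * S ≤ ∑ a ∈ C, A a := by
    rw [hSdef, Finset.mul_sum]; exact Finset.sum_le_sum step2
  have hfin : t₀ * S ≤ t₁ := le_trans h2 step3
  have hS' : S ≤ t₁ / t₀ := (le_div_iff₀ ht₀pos).mpr (by linarith [mul_comm t₀ S])
  calc (∑ w ∈ Finset.univ.filter (fun w : (Fin n → X) × (Fin n → Y) =>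
          typical p ε ε' w ∧
          (fdev (margFst p) w.1 ≤ ε ∧ condNotTyp p ε ε' w.1 > t₀)),
        jointSeqProb p w) ≤ S := step1
    _ ≤ t₁ / t₀ := hS'
    _ = (2 : ℝ) ^ (-((n : ℝ) * (b₁ - b₀) * ε)) := by
        rw [ht₁def, ht₀def, ← Real.rpow_sub two_pos]
        congr 1; ring
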